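/- Fix integers n ≥ 1 and m ≥ n, let p_k be the elementary Schur polynomials in n variables, and define Φ(t; y) = Σ_{k=0}^m t_k p_{k+1}(y). Let u : Ω → ℝ^n be a smooth map on an open set Ω ⊂ ℝ^{m+1} such that for every t ∈ Ω: (i) the critical equations Σ_{k=0}^m t_k p_{k+1−i}(u(t)) = 0 hold for all i ∈ {1, …, n}, and (ii) Φ_{n,1}(t) := Σ_{l=0}^m t_l p_{l−n}(u(t)) ≠ 0 (equivalently, ∂²Φ/∂y_n∂y_1 is nonzero at u(t)). Then for every k ∈ {1, …, m}, ∂u/∂t_k = A_k(u(t)) · ∂u/∂t_0, where A_k(u) is the n×n upper-triangular Toeplitz matrix with entries (A_k(u))_{i,j} = p_{k+i−j}(u) for i ≤ j and 0 for i > j. In particular for k = 1 the coefficient matrix is the single Jordan block with eigenvalue u_1 and superdiagonal 1, so the system is non-diagonalizable. -/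

import Mathlib

open MvPolynomial

/-- The elementary Schur polynomials in `n` variables, with `p_k = 0` for `k < 0`. -/
noncomputable def schurP (n : ℕ) (k : ℤ) : MvPolynomial (Fin n) ℝ :=
  if k < 0 then 0
  else
    ∑ d ∈ Finset.filter
        (fun d : Fin n → ℕ => ∑ i, (i.1 + 1) * d i = k.toNat)
        (Fintype.piFinset fun _ => Finset.range (k.toNat + 1)),
      C (∏ i, ((Nat.factorial (d i) : ℝ))⁻¹) *
        ∏ i, (X i : MvPolynomial (Fin n) ℝ) ^ d i

/-- `p_k` evaluated at a point of `ℝⁿ`. -/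
noncomputable def schurPf (n : ℕ) (k : ℤ) (y : Fin n → ℝ) : ℝ :=
  eval y (schurP n k)

/-- The `n×n` upper-triangular Toeplitz matrix `A_k(u)` with entries
`(A_k(u))_{i,j} = p_{k+i-j}(u)` for `i ≤ j` and `0` for `i > j`. -/
noncomputable def AMat (n : ℕ) (k : ℕ) (u : Fin n → ℝ) :
    Matrix (Fin n) (Fin n) ℝ :=
  fun i j => if i ≤ j then schurPf n ((k : ℤ) + i.1 - j.1) u else 0


section Aux
open Matrix

def schurSupp (n K : ℕ) : Finset (Fin n → ℕ) :=
  Finset.filter (fun d : Fin n → ℕ => ∑ i, (i.1 + 1) * d i = K)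
    (Fintype.piFinset fun _ => Finset.range (K + 1))

lemma mem_schurSupp {n K : ℕ} {d : Fin n → ℕ} :
    d ∈ schurSupp n K ↔ ∑ i, (i.1 + 1) * d i = K := by
  constructor
  · intro h; exact (Finset.mem_filter.1 h).2
  · intro h
    refine Finset.mem_filter.2 ⟨Fintype.mem_piFinset.2 fun i => Finset.mem_range.2 ?_, h⟩
    have h1 : d i ≤ (i.1 + 1) * d i := Nat.le_mul_of_pos_left _ (Nat.succ_pos _)
    have h2 : (i.1 + 1) * d i ≤ K := h ▸ Finset.single_le_sum (f := fun i => (i.1+1) * d i)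
      (fun _ _ => Nat.zero_le _) (Finset.mem_univ i)
    omega

lemma schurP_natCast (n K : ℕ) :
    schurP n (K : ℤ) = ∑ d ∈ schurSupp n K,
      C (∏ i, ((Nat.factorial (d i) : ℝ))⁻¹) *
        ∏ i, (X i : MvPolynomial (Fin n) ℝ) ^ d i := by
  rw [schurP, if_neg (by omega), Int.toNat_natCast]; rfl

lemma schurP_neg {n : ℕ} {k : ℤ} (hk : k < 0) : schurP n k = 0 := by
  rw [schurP, if_pos hk]

lemma schurPf_neg {n : ℕ} {k : ℤ} (hk : k < 0) (y : Fin n → ℝ) : schurPf n k y = 0 := by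
  rw [schurPf, schurP_neg hk, map_zero]

lemma schurSupp_zero (n : ℕ) : schurSupp n 0 = {fun _ => 0} := by
  ext d
  simp only [mem_schurSupp, Finset.mem_singleton]
  constructor
  · intro h
    funext i
    have := Finset.sum_eq_zero_iff.1 h i (Finset.mem_univ i)
    simpa using this
  · rintro rfl; simp

lemma schurPf_zero (n : ℕ) (y : Fin n → ℝ) : schurPf n 0 y = 1 := by
  rw [schurPf]
  rw [show (0:ℤ) = ((0:ℕ):ℤ) by norm_num, schurP_natCast, schurSupp_zero]
  simp

lemma schurSupp_one {n : ℕ} (hn : 1 ≤ n) : schurSupp n 1 = {Pi.single (⟨0, hn⟩ : Fin n) 1} := by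
  ext d
  simp only [mem_schurSupp, Finset.mem_singleton]
  constructor
  · intro h
    funext i
    rcases eq_or_ne i ⟨0, hn⟩ with rfl | hi
    · simp only [Pi.single_eq_same]
      have := Finset.single_le_sum (f := fun i : Fin n => (i.1+1) * d i)
        (fun _ _ => Nat.zero_le _) (Finset.mem_univ ⟨0, hn⟩)
      rw [h] at this
      simp only at this
      by_contra hd
      -- d ⟨0,hn⟩ ≠ 1, and 1 * d ≤ 1 so d = 0; then sum over others = 1, contradiction?
      have hd0 : d ⟨0, hn⟩ = 0 := by omega
      -- sum = 1 with the 0-term zero ⇒ some i≥1 has (i+1) d i = 1, impossible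
      have : ∑ i, (i.1 + 1) * d i = ∑ i ∈ Finset.univ.erase ⟨0,hn⟩, (i.1+1) * d i := by
        rw [← Finset.add_sum_erase _ _ (Finset.mem_univ ⟨0,hn⟩), hd0, Nat.mul_zero, Nat.zero_add]
      rw [this] at h
      obtain ⟨i, hi, hne⟩ := Finset.exists_ne_zero_of_sum_ne_zero (by omega : ∑ i ∈ Finset.univ.erase ⟨0,hn⟩, (i.1+1) * d i ≠ 0)
      have hile : (i.1 + 1) * d i ≤ 1 := h ▸ Finset.single_le_sum (f := fun i : Fin n => (i.1+1) * d i)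
        (fun _ _ => Nat.zero_le _) hi
      have hi0 : i.1 ≠ 0 := fun h0 => (Finset.mem_erase.1 hi).1 (Fin.ext h0)
      have hd1 : 1 ≤ d i := Nat.pos_of_ne_zero (fun h0 => hne (by rw [h0, Nat.mul_zero]))
      have : i.1 + 1 ≤ (i.1 + 1) * d i := Nat.le_mul_of_pos_right _ hd1
      omega
    · have hi' : i.1 ≠ 0 := fun h0 => hi (Fin.ext h0)
      rw [Pi.single_eq_of_ne hi]
      have hile : (i.1 + 1) * d i ≤ 1 := h ▸ Finset.single_le_sum (f := fun i : Fin n => (i.1+1) * d i)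
        (fun _ _ => Nat.zero_le _) (Finset.mem_univ i)
      by_contra hd
      have hd1 : 1 ≤ d i := Nat.pos_of_ne_zero hd
      have : i.1 + 1 ≤ (i.1 + 1) * d i := Nat.le_mul_of_pos_right _ hd1
      omega
  · rintro rfl
    rw [Finset.sum_eq_single (⟨0, hn⟩ : Fin n)]
    · simp
    · intro b _ hb; rw [Pi.single_eq_of_ne hb, Nat.mul_zero]
    · intro h; exact absurd (Finset.mem_univ _) h

lemma schurPf_one {n : ℕ} (hn : 1 ≤ n) (y : Fin n → ℝ) : schurPf n 1 y = y ⟨0, hn⟩ := by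
  rw [schurPf, show (1:ℤ) = ((1:ℕ):ℤ) by norm_num, schurP_natCast, schurSupp_one hn]
  rw [Finset.sum_singleton]
  have h1 : (∏ i, ((Nat.factorial ((Pi.single (⟨0,hn⟩ : Fin n) 1 : Fin n → ℕ) i) : ℝ))⁻¹) = 1 := by
    apply Finset.prod_eq_one; intro i _
    rcases eq_or_ne i ⟨0, hn⟩ with rfl | hi
    · simp
    · rw [Pi.single_eq_of_ne hi]; simp
  have h2 : (∏ i, (X i : MvPolynomial (Fin n) ℝ) ^ ((Pi.single (⟨0,hn⟩ : Fin n) 1 : Fin n → ℕ) i)) = (X ⟨0,hn⟩ : MvPolynomial (Fin n) ℝ) := by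
    rw [Finset.prod_eq_single (⟨0,hn⟩ : Fin n)]
    · simp
    · intro b _ hb; rw [Pi.single_eq_of_ne hb, pow_zero]
    · intro h; exact absurd (Finset.mem_univ _) h
  rw [h1, h2]
  simp


variable {n : ℕ}

lemma prod_pow_eq_monomial (d : Fin n → ℕ) :
    (∏ i, (X i : MvPolynomial (Fin n) ℝ) ^ d i)
      = monomial (Finsupp.equivFunOnFinite.symm d) (1:ℝ) := by
  rw [monomial_eq, Finsupp.prod_fintype]
  · simp
  · intro i; exact pow_zero _

lemma term_eq_monomial (d : Fin n → ℕ) :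
    C (∏ i, ((Nat.factorial (d i) : ℝ))⁻¹) * ∏ i, (X i : MvPolynomial (Fin n) ℝ) ^ d i
      = monomial (Finsupp.equivFunOnFinite.symm d) (∏ i, ((Nat.factorial (d i) : ℝ))⁻¹) := by
  rw [prod_pow_eq_monomial, C_mul_monomial, mul_one]

lemma pderiv_schurP (k : ℤ) (j : Fin n) :
    pderiv j (schurP n k) = schurP n (k - (j.1 + 1)) := by
  rcases lt_or_ge k 0 with hk | hk
  · rw [schurP_neg hk, schurP_neg (by omega), map_zero]
  obtain ⟨K, rfl⟩ : ∃ K : ℕ, k = (K : ℤ) := ⟨k.toNat, (Int.toNat_of_nonneg hk).symm⟩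
  rw [schurP_natCast, map_sum]
  have hterm : ∀ d : Fin n → ℕ,
      pderiv j (C (∏ i, ((Nat.factorial (d i) : ℝ))⁻¹) * ∏ i, (X i : MvPolynomial (Fin n) ℝ) ^ d i)
        = monomial (Finsupp.equivFunOnFinite.symm d - Finsupp.single j 1)
            ((∏ i, ((Nat.factorial (d i) : ℝ))⁻¹) * (d j : ℝ)) := by
    intro d
    rw [term_eq_monomial, pderiv_monomial]
    congr 1
  rcases lt_or_ge (K : ℤ) ((j.1 : ℤ) + 1) with hKj | hKj
  · -- all terms have d j = 0
    rw [schurP_neg (by omega)]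
    apply Finset.sum_eq_zero
    intro d hd
    have hdj : d j = 0 := by
      have h1 : (j.1 + 1) * d j ≤ K := (mem_schurSupp.1 hd) ▸
        Finset.single_le_sum (f := fun i : Fin n => (i.1+1) * d i)
          (fun _ _ => Nat.zero_le _) (Finset.mem_univ j)
      by_contra h0
      have : j.1 + 1 ≤ (j.1 + 1) * d j := Nat.le_mul_of_pos_right _ (Nat.pos_of_ne_zero h0)
      omega
    rw [hterm d, hdj]
    simp
  · -- bijection case
    have hKj' : j.1 + 1 ≤ K := by omega
    have hcast : (K : ℤ) - ((j.1 : ℤ) + 1) = ((K - (j.1 + 1) : ℕ) : ℤ) := by omega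
    rw [hcast, schurP_natCast]
    set K' := K - (j.1 + 1) with hK'
    -- restrict LHS to d with d j ≠ 0
    rw [show (∑ d ∈ schurSupp n K, pderiv j
          (C (∏ i, ((Nat.factorial (d i) : ℝ))⁻¹) * ∏ i, (X i : MvPolynomial (Fin n) ℝ) ^ d i))
        = ∑ d ∈ (schurSupp n K).filter (fun d => d j ≠ 0), pderiv j
          (C (∏ i, ((Nat.factorial (d i) : ℝ))⁻¹) * ∏ i, (X i : MvPolynomial (Fin n) ℝ) ^ d i) by
      refine (Finset.sum_filter_of_ne ?_).symm
      intro d _ hne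
      by_contra h0
      exact hne (by rw [hterm d, h0]; simp)]
    refine Finset.sum_nbij' (i := fun d => Function.update d j (d j - 1))
      (j := fun d' => Function.update d' j (d' j + 1)) ?_ ?_ ?_ ?_ ?_
    · intro d hd
      obtain ⟨hd1, hd2⟩ := Finset.mem_filter.1 hd
      have hsum := mem_schurSupp.1 hd1
      apply mem_schurSupp.2
      have e1 : ∑ i, (i.1+1) * Function.update d j (d j - 1) i
          = (j.1+1) * (d j - 1) + ∑ i ∈ Finset.univ.erase j, (i.1+1) * d i := by
        have hh := (Finset.add_sum_erase Finset.univ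
          (fun i : Fin n => (i.1+1) * Function.update d j (d j - 1) i) (Finset.mem_univ j)).symm
        rw [hh, Function.update_self]
        congr 1
        apply Finset.sum_congr rfl
        intro i hi
        rw [Function.update_of_ne (Finset.mem_erase.1 hi).1]
      have e2 : ∑ i, (i.1+1) * d i = (j.1+1) * (d j) + ∑ i ∈ Finset.univ.erase j, (i.1+1) * d i :=
        (Finset.add_sum_erase _ (fun i : Fin n => (i.1+1) * d i) (Finset.mem_univ j)).symm
      have e3 : (j.1+1) * (d j - 1) = (j.1+1) * d j - (j.1+1) := by
        rw [Nat.mul_sub, Nat.mul_one]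
      have hdj : 1 ≤ d j := Nat.pos_of_ne_zero hd2
      have : j.1 + 1 ≤ (j.1+1) * d j := Nat.le_mul_of_pos_right _ hdj
      omega
    · intro d' hd'
      have hsum := mem_schurSupp.1 hd'
      refine Finset.mem_filter.2 ⟨mem_schurSupp.2 ?_, ?_⟩
      · have e1 : ∑ i, (i.1+1) * Function.update d' j (d' j + 1) i
            = (j.1+1) * (d' j + 1) + ∑ i ∈ Finset.univ.erase j, (i.1+1) * d' i := by
          have hh := (Finset.add_sum_erase Finset.univ
            (fun i : Fin n => (i.1+1) * Function.update d' j (d' j + 1) i) (Finset.mem_univ j)).symm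
          rw [hh, Function.update_self]
          congr 1
          apply Finset.sum_congr rfl
          intro i hi
          rw [Function.update_of_ne (Finset.mem_erase.1 hi).1]
        have e2 : ∑ i, (i.1+1) * d' i = (j.1+1) * (d' j) + ∑ i ∈ Finset.univ.erase j, (i.1+1) * d' i :=
          (Finset.add_sum_erase _ (fun i : Fin n => (i.1+1) * d' i) (Finset.mem_univ j)).symm
        have e3 : (j.1+1) * (d' j + 1) = (j.1+1) * d' j + (j.1+1) := by ring
        omega
      · simp [Function.update_self]
    · intro d hd
      have hdj : 1 ≤ d j := Nat.pos_of_ne_zero (Finset.mem_filter.1 hd).2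
      funext i
      rcases eq_or_ne i j with rfl | hij
      · simp [Function.update_self]; omega
      · simp [Function.update_of_ne hij]
    · intro d' _
      funext i
      rcases eq_or_ne i j with rfl | hij
      · simp [Function.update_self]
      · simp [Function.update_of_ne hij]
    · intro d hd
      have hdj : 1 ≤ d j := Nat.pos_of_ne_zero (Finset.mem_filter.1 hd).2
      have hfs : Finsupp.equivFunOnFinite.symm d - Finsupp.single j 1
          = Finsupp.equivFunOnFinite.symm (Function.update d j (d j - 1)) := by
        ext i
        rw [Finsupp.tsub_apply]
        rcases eq_or_ne i j with rfl | hij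
        · simp [Finsupp.single_eq_same, Function.update_self]
        · simp [Finsupp.single_eq_of_ne hij, Function.update_of_ne hij]
      have hcoef : (∏ i, ((Nat.factorial (d i) : ℝ))⁻¹) * ((d j : ℕ) : ℝ)
          = ∏ i, ((Nat.factorial ((Function.update d j (d j - 1)) i) : ℝ))⁻¹ := by
        have p1 : (∏ i, ((Nat.factorial (d i):ℝ))⁻¹)
            = (∏ i ∈ Finset.univ.erase j, ((Nat.factorial (d i):ℝ))⁻¹) * ((Nat.factorial (d j):ℝ))⁻¹ :=
          (Finset.prod_erase_mul _ (fun i => ((Nat.factorial (d i):ℝ))⁻¹) (Finset.mem_univ j)).symm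
        have p2 : (∏ i, ((Nat.factorial ((Function.update d j (d j - 1)) i):ℝ))⁻¹)
            = (∏ i ∈ Finset.univ.erase j, ((Nat.factorial ((Function.update d j (d j - 1)) i):ℝ))⁻¹)
              * ((Nat.factorial ((Function.update d j (d j - 1)) j):ℝ))⁻¹ :=
          (Finset.prod_erase_mul _ (fun i => ((Nat.factorial ((Function.update d j (d j - 1)) i):ℝ))⁻¹) (Finset.mem_univ j)).symm
        have he : ∀ i ∈ Finset.univ.erase j,
            ((Nat.factorial ((Function.update d j (d j - 1)) i) : ℝ))⁻¹ = ((Nat.factorial (d i) : ℝ))⁻¹ := by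
          intro i hi
          rw [Function.update_of_ne (Finset.mem_erase.1 hi).1]
        rw [p1, p2, Finset.prod_congr rfl he, Function.update_self]
        have hfact : (Nat.factorial (d j) : ℝ) = (d j : ℝ) * (Nat.factorial (d j - 1) : ℝ) := by
          obtain ⟨c, hc⟩ : ∃ c, d j = c + 1 := ⟨d j - 1, by omega⟩
          rw [hc]
          simp only [Nat.add_sub_cancel, Nat.factorial_succ]
          push_cast
          ring
        have h0 : (Nat.factorial (d j - 1) : ℝ) ≠ 0 := Nat.cast_ne_zero.2 (Nat.factorial_ne_zero _)
        have h1 : (d j : ℝ) ≠ 0 := Nat.cast_ne_zero.2 (by omega)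
        rw [mul_assoc, hfact]
        field_simp
      rw [hterm d, term_eq_monomial, hfs, hcoef]


lemma hasFDerivAt_eval {n : ℕ} (y : Fin n → ℝ) (P : MvPolynomial (Fin n) ℝ) :
    HasFDerivAt (fun z : Fin n → ℝ => eval z P)
      (∑ j : Fin n, eval y (pderiv j P) •
        (ContinuousLinearMap.proj j : (Fin n → ℝ) →L[ℝ] ℝ)) y := by
  induction P using MvPolynomial.induction_on with
  | C a =>
    have : (∑ j : Fin n, eval y (pderiv j (C a : MvPolynomial (Fin n) ℝ)) •
        (ContinuousLinearMap.proj j : (Fin n → ℝ) →L[ℝ] ℝ)) = 0 := by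
      apply Finset.sum_eq_zero
      intro j _
      rw [pderiv_C]
      simp
    rw [this]
    simpa using hasFDerivAt_const (a : ℝ) y
  | add p q hp hq =>
    have := hp.add hq
    refine HasFDerivAt.congr_of_eventuallyEq (this.congr_fderiv (Eq.symm ?_)) (Filter.EventuallyEq.of_eq ?_)
    rotate_left
    · funext z; simp
    · rw [← Finset.sum_add_distrib]
      apply Finset.sum_congr rfl
      intro j _
      rw [map_add, map_add, add_smul]
  | mul_X p i hp =>
    have hXi : HasFDerivAt (fun z : Fin n → ℝ => z i)
        (ContinuousLinearMap.proj i : (Fin n → ℝ) →L[ℝ] ℝ) y :=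
      (ContinuousLinearMap.proj i : (Fin n → ℝ) →L[ℝ] ℝ).hasFDerivAt
    have hmul := hp.mul hXi
    refine HasFDerivAt.congr_of_eventuallyEq (hmul.congr_fderiv (Eq.symm ?_)) (Filter.EventuallyEq.of_eq ?_)
    rotate_left
    · funext z; simp
    · rw [Finset.smul_sum]
      have key : ∀ j : Fin n,
          eval y (pderiv j (p * X i)) •
            (ContinuousLinearMap.proj j : (Fin n → ℝ) →L[ℝ] ℝ)
          = (y i * eval y (pderiv j p)) • (ContinuousLinearMap.proj j : (Fin n → ℝ) →L[ℝ] ℝ)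
            + (if j = i then eval y p • (ContinuousLinearMap.proj i : (Fin n → ℝ) →L[ℝ] ℝ) else 0) := by
        intro j
        rw [pderiv_mul]
        rcases eq_or_ne j i with rfl | hji
        · rw [if_pos rfl, pderiv_X_self]
          simp [add_smul, mul_comm]
        · rw [if_neg hji, pderiv_X_of_ne (Ne.symm hji)]
          simp [mul_comm]
      rw [Finset.sum_congr rfl (fun j _ => key j), Finset.sum_add_distrib]
      rw [Finset.sum_ite_eq' Finset.univ i
        (fun _ => eval y p • (ContinuousLinearMap.proj i : (Fin n → ℝ) →L[ℝ] ℝ))]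
      simp only [Finset.mem_univ, if_pos]
      rw [add_comm]
      congr 1
      apply Finset.sum_congr rfl
      intro j _
      rw [smul_smul]


lemma key_linalg {n : ℕ} (hn : 1 ≤ n) (k : ℕ) (p g : ℤ → ℝ)
    (hp_neg : ∀ a : ℤ, a < 0 → p a = 0) (hp0 : p 0 = 1)
    (hg0 : ∀ r : ℤ, 0 ≤ r → r < (n : ℤ) → g r = 0) (hgn : g (n : ℤ) ≠ 0)
    (x y0 : Fin n → ℝ)
    (hx : ∀ i : Fin n, p ((k : ℤ) - i.1) + ∑ j, g ((i.1 : ℤ) + j.1 + 1) * x j = 0)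
    (hy : ∀ i : Fin n, p (0 - (i.1 : ℤ)) + ∑ j, g ((i.1 : ℤ) + j.1 + 1) * y0 j = 0) :
    ∀ i : Fin n, x i
      = ∑ j, (if i ≤ j then p ((k : ℤ) + i.1 - j.1) else 0) * y0 j := by
  classical
  let M : Matrix (Fin n) (Fin n) ℝ := fun i j => g ((i.1 : ℤ) + j.1 + 1)
  have hM : ∀ i j : Fin n, M i j = g ((i.1 : ℤ) + j.1 + 1) := fun _ _ => rfl
  let A : Matrix (Fin n) (Fin n) ℝ :=
    fun i j => if i ≤ j then p ((k : ℤ) + i.1 - j.1) else 0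
  have hA : ∀ i j : Fin n, A i j = if i ≤ j then p ((k : ℤ) + i.1 - j.1) else 0 := fun _ _ => rfl
  let L : ℕ → ℕ → ℝ :=
    fun a b => ∑ r ∈ Finset.range (b + 1), g ((a : ℤ) + r + 1) * p ((k : ℤ) + r - b)
  have hL : ∀ a b : ℕ, L a b
      = ∑ r ∈ Finset.range (b + 1), g ((a : ℤ) + r + 1) * p ((k : ℤ) + r - b) := fun _ _ => rfl
  have claim1 : ∀ a b : ℕ, b < n → a ≤ b → L a b = L b a := by
    intro a b hbn hab
    rw [hL, hL]
    rw [show b + 1 = (b - a) + (a + 1) by omega, Finset.sum_range_add]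
    rw [Finset.sum_eq_zero (fun r hr => by
      rw [hg0 ((a : ℤ) + r + 1) (by positivity) (by
        have : r < b - a := Finset.mem_range.1 hr
        omega), zero_mul]), zero_add]
    apply Finset.sum_congr rfl
    intro s _
    have h1 : ((b - a + s : ℕ) : ℤ) = (b : ℤ) - a + s := by omega
    rw [h1]
    congr 2 <;> ring
  have claim2 : ∀ i j : Fin n, (M * A) i j = L i.1 j.1 := by
    intro i j
    rw [Matrix.mul_apply, hL]
    have step1 : ∀ r : Fin n, M i r * A r j
        = (fun r : ℕ => if r ≤ j.1 then g ((i.1 : ℤ) + r + 1) * p ((k : ℤ) + r - j.1) else 0) r.1 := by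
      intro r
      rw [hM, hA]
      simp only [Fin.le_def]
      rcases le_or_gt r.1 j.1 with h | h
      · rw [if_pos h, if_pos h]
      · rw [if_neg (by omega), if_neg (by omega), mul_zero]
    have huniv := Fin.sum_univ_eq_sum_range
      (fun r : ℕ => if r ≤ j.1 then g ((i.1 : ℤ) + r + 1) * p ((k : ℤ) + r - j.1) else 0) n
    rw [Finset.sum_congr rfl (fun r _ => step1 r), huniv]
    rw [← Finset.sum_subset (Finset.range_subset_range.2 (by omega : j.1 + 1 ≤ n))
      (fun r _ hr => if_neg (by simp at hr ⊢; omega))]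
    apply Finset.sum_congr rfl
    intro r hr
    rw [if_pos (by simp at hr; omega)]
  have claim3 : ∀ i j : Fin n, (Aᵀ * M) i j = L j.1 i.1 := by
    intro i j
    rw [Matrix.mul_apply, hL]
    have step1 : ∀ r : Fin n, Aᵀ i r * M r j
        = (fun r : ℕ => if r ≤ i.1 then g ((j.1 : ℤ) + r + 1) * p ((k : ℤ) + r - i.1) else 0) r.1 := by
      intro r
      rw [Matrix.transpose_apply, hM, hA]
      simp only [Fin.le_def]
      rcases le_or_gt r.1 i.1 with h | h
      · rw [if_pos h, if_pos h, mul_comm]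
        congr 2
        ring
      · rw [if_neg (by omega), if_neg (by omega), zero_mul]
    have huniv := Fin.sum_univ_eq_sum_range
      (fun r : ℕ => if r ≤ i.1 then g ((j.1 : ℤ) + r + 1) * p ((k : ℤ) + r - i.1) else 0) n
    rw [Finset.sum_congr rfl (fun r _ => step1 r), huniv]
    rw [← Finset.sum_subset (Finset.range_subset_range.2 (by omega : i.1 + 1 ≤ n))
      (fun r _ hr => if_neg (by simp at hr ⊢; omega))]
    apply Finset.sum_congr rfl
    intro r hr
    rw [if_pos (by simp at hr; omega)]
  have hMA : M * A = Aᵀ * M := by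
    ext i j
    rw [claim2 i j, claim3 i j]
    rcases le_or_gt i.1 j.1 with h | h
    · exact claim1 i.1 j.1 j.2 h
    · exact (claim1 j.1 i.1 i.2 (le_of_lt h)).symm
  have hinj : ∀ z : Fin n → ℝ, M.mulVec z = 0 → z = 0 := by
    intro z hz
    have key : ∀ c : ℕ, ∀ j : Fin n, n - 1 - j.1 ≤ c → z j = 0 := by
      intro c
      induction c with
      | zero =>
        intro j hj
        have hj' : j.1 = n - 1 := by omega
        have hrow := congrFun hz ⟨0, by omega⟩
        simp only [Matrix.mulVec, dotProduct, Pi.zero_apply] at hrow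
        rw [Finset.sum_eq_single j] at hrow
        · have hMg : M ⟨0, by omega⟩ j = g (n : ℤ) := by
            simp only [hM]
            congr 1
            omega
          rw [hMg] at hrow
          exact (mul_eq_zero.1 hrow).resolve_left hgn
        · intro b _ hb
          have hb' : b.1 < n - 1 := by
            rcases lt_or_ge b.1 (n-1) with h | h
            · exact h
            · have := b.2; exact absurd (Fin.ext (by omega : b.1 = j.1)) hb
          have hM0 : M ⟨0, by omega⟩ b = 0 := by
            simp only [hM]
            apply hg0 _ (by positivity)
            omega
          rw [hM0, zero_mul]
        · intro h; exact absurd (Finset.mem_univ _) h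
      | succ c ih =>
        intro j hj
        rcases le_or_gt (n - 1 - j.1) c with h | h
        · exact ih j h
        have hj' : n - 1 - j.1 = c + 1 := by omega
        have hrow := congrFun hz ⟨c + 1, by omega⟩
        simp only [Matrix.mulVec, dotProduct, Pi.zero_apply] at hrow
        rw [Finset.sum_eq_single j] at hrow
        · have hMg : M ⟨c + 1, by omega⟩ j = g (n : ℤ) := by
            simp only [hM]
            congr 1
            omega
          rw [hMg] at hrow
          exact (mul_eq_zero.1 hrow).resolve_left hgn
        · intro b _ hb
          rcases lt_or_ge b.1 j.1 with hbj | hbj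
          · have hM0 : M ⟨c + 1, by omega⟩ b = 0 := by
              simp only [hM]
              apply hg0 _ (by positivity)
              omega
            rw [hM0, zero_mul]
          · have hbj' : j.1 < b.1 := by
              rcases lt_or_ge j.1 b.1 with h' | h'
              · exact h'
              · exact absurd (Fin.ext (by omega : b.1 = j.1)) hb
            rw [ih b (by omega), mul_zero]
        · intro h; exact absurd (Finset.mem_univ _) h
    funext j
    exact key (n - 1 - j.1) j le_rfl
  have hxM : M.mulVec x = fun i => -p ((k : ℤ) - i.1) := by
    funext i
    simp only [Matrix.mulVec, dotProduct, hM]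
    linarith [hx i]
  have hyM : M.mulVec y0 = fun i => -p (0 - (i.1 : ℤ)) := by
    funext i
    simp only [Matrix.mulVec, dotProduct, hM]
    linarith [hy i]
  have hAy : M.mulVec (A.mulVec y0) = fun i => -p ((k : ℤ) - i.1) := by
    rw [Matrix.mulVec_mulVec, hMA, ← Matrix.mulVec_mulVec, hyM]
    funext i
    simp only [Matrix.mulVec, dotProduct]
    rw [Finset.sum_eq_single (⟨0, by omega⟩ : Fin n)]
    · rw [Matrix.transpose_apply, hA]
      simp only [Fin.val_mk, Nat.cast_zero]
      rw [if_pos (by simp [Fin.le_def])]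
      rw [show (0:ℤ) - 0 = 0 by ring, hp0]
      rw [show (k:ℤ) + 0 - i.1 = (k:ℤ) - i.1 by ring]
      ring
    · intro b _ hb
      have hb0 : 0 < b.1 := by
        rcases Nat.eq_zero_or_pos b.1 with h | h
        · exact absurd (Fin.ext h) hb
        · exact h
      rw [show p (0 - (b.1 : ℤ)) = 0 from hp_neg _ (by omega)]
      simp
    · intro h; exact absurd (Finset.mem_univ _) h
  have hdiff : M.mulVec (x - A.mulVec y0) = 0 := by
    rw [Matrix.mulVec_sub, hxM, hAy]
    funext i
    simp
  have hfin := hinj _ hdiff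
  intro i
  have heq := congrFun hfin i
  simp only [Pi.sub_apply, Pi.zero_apply, sub_eq_zero] at heq
  rw [heq]
  simp only [Matrix.mulVec, dotProduct, hA]

end Aux

/-- at a critical point of `Φ(t;y) = Σ_{k=0}^m t_k p_{k+1}(y)`
with `Φ_{n,1} = Σ_l t_l p_{l-n}(u(t)) ≠ 0`, the deformation `u(t)` satisfies
the non-diagonalizable hydrodynamic type hierarchy
`∂u/∂t_k = A_k(u(t)) ∂u/∂t₀`; in particular `A_1(u)` is a single Jordan block
with eigenvalue `u₁` and superdiagonal `1`. -/
theorem most_degenerate_confluent_hierarchy (n m : ℕ) (hn : 1 ≤ n) (hm : n ≤ m)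
    (Ω : Set (Fin (m + 1) → ℝ)) (hΩ : IsOpen Ω)
    (u : (Fin (m + 1) → ℝ) → (Fin n → ℝ)) (hu : ContDiffOn ℝ (⊤ : ℕ∞) u Ω)
    (hcrit : ∀ t ∈ Ω, ∀ i : Fin n,
      ∑ k : Fin (m + 1), t k * schurPf n ((k.1 : ℤ) - i.1) (u t) = 0)
    (hnd : ∀ t ∈ Ω,
      ∑ l : Fin (m + 1), t l * schurPf n ((l.1 : ℤ) - n) (u t) ≠ 0) :
    (∀ t ∈ Ω, ∀ k : Fin (m + 1), k ≠ 0 → ∀ i : Fin n,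
      fderiv ℝ (fun s => u s i) t (Pi.single k 1)
        = ∑ j : Fin n, AMat n k.1 (u t) i j *
            fderiv ℝ (fun s => u s j) t (Pi.single 0 1))
    ∧ (∀ w : Fin n → ℝ, ∀ i j : Fin n,
        AMat n 1 w i j
          = if i = j then w ⟨0, hn⟩ else if i.1 + 1 = j.1 then 1 else 0) := by
  constructor
  · intro t ht k hk i
    -- differentiability of u at t
    have hud : DifferentiableAt ℝ u t :=
      (hu.contDiffAt (hΩ.mem_nhds ht)).differentiableAt (by simp)
    set U := fderiv ℝ u t with hUdef
    have hU : HasFDerivAt u U t := hud.hasFDerivAt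
    have hproj : ∀ j : Fin n, fderiv ℝ (fun s => u s j) t
        = (ContinuousLinearMap.proj j : (Fin n → ℝ) →L[ℝ] ℝ).comp U := by
      intro j
      exact ((ContinuousLinearMap.proj j :
        (Fin n → ℝ) →L[ℝ] ℝ).hasFDerivAt.comp t hU).fderiv
    -- E1 : the differentiated critical equations
    have E1 : ∀ i : Fin n, ∀ κ : Fin (m + 1),
        schurPf n ((κ.1 : ℤ) - i.1) (u t)
          + ∑ j : Fin n,
              (∑ l : Fin (m + 1), t l * schurPf n ((l.1 : ℤ) - ((i.1 : ℤ) + j.1 + 1)) (u t))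
                * U (Pi.single κ 1) j = 0 := by
      intro i κ
      -- the function F
      set F : (Fin (m + 1) → ℝ) → ℝ :=
        fun s => ∑ l : Fin (m + 1), s l * eval (u s) (schurP n ((l.1 : ℤ) - i.1)) with hF
      -- derivative of each evaluation
      have heval : ∀ l : Fin (m + 1),
          HasFDerivAt (fun s => eval (u s) (schurP n ((l.1 : ℤ) - i.1)))
            (((∑ j : Fin n, eval (u t) (pderiv j (schurP n ((l.1 : ℤ) - i.1))) •
              (ContinuousLinearMap.proj j : (Fin n → ℝ) →L[ℝ] ℝ))).comp U) t :=
        fun l => (hasFDerivAt_eval (u t) (schurP n ((l.1 : ℤ) - i.1))).comp t hU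
      have hterm : ∀ l : Fin (m + 1),
          HasFDerivAt (fun s => s l * eval (u s) (schurP n ((l.1 : ℤ) - i.1)))
            (t l • (((∑ j : Fin n, eval (u t) (pderiv j (schurP n ((l.1 : ℤ) - i.1))) •
                (ContinuousLinearMap.proj j : (Fin n → ℝ) →L[ℝ] ℝ))).comp U)
              + eval (u t) (schurP n ((l.1 : ℤ) - i.1)) •
                (ContinuousLinearMap.proj l : (Fin (m+1) → ℝ) →L[ℝ] ℝ)) t := by
        intro l
        exact ((ContinuousLinearMap.proj l :
          (Fin (m+1) → ℝ) →L[ℝ] ℝ).hasFDerivAt).mul (heval l)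
      have hFd : HasFDerivAt F
          (∑ l : Fin (m + 1),
            (t l • (((∑ j : Fin n, eval (u t) (pderiv j (schurP n ((l.1 : ℤ) - i.1))) •
                (ContinuousLinearMap.proj j : (Fin n → ℝ) →L[ℝ] ℝ))).comp U)
              + eval (u t) (schurP n ((l.1 : ℤ) - i.1)) •
                (ContinuousLinearMap.proj l : (Fin (m+1) → ℝ) →L[ℝ] ℝ))) t :=
        HasFDerivAt.fun_sum (fun l _ => hterm l)
      have heq : F =ᶠ[nhds t] (fun _ => (0:ℝ)) := by
        filter_upwards [hΩ.mem_nhds ht] with s hs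
        exact hcrit s hs i
      have hzero : HasFDerivAt F (0 : (Fin (m+1) → ℝ) →L[ℝ] ℝ) t := by
        have h0 : HasFDerivAt (fun _ : Fin (m+1) → ℝ => (0:ℝ))
            (0 : (Fin (m+1) → ℝ) →L[ℝ] ℝ) t := hasFDerivAt_const (0:ℝ) t
        exact h0.congr_of_eventuallyEq heq
      have hGzero := hFd.unique hzero
      have happ := congrArg (fun (L : (Fin (m+1) → ℝ) →L[ℝ] ℝ) => L (Pi.single κ 1)) hGzero
      simp only [ContinuousLinearMap.sum_apply, ContinuousLinearMap.add_apply,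
        ContinuousLinearMap.smul_apply, ContinuousLinearMap.comp_apply,
        ContinuousLinearMap.proj_apply, ContinuousLinearMap.zero_apply,
        smul_eq_mul] at happ
      -- happ : ∑ l, (t l * (∑ j, eval ... • proj j) (U e_κ) + c_l * e_κ l) = 0
      rw [Finset.sum_add_distrib] at happ
      have h2 : ∑ l : Fin (m+1),
          eval (u t) (schurP n ((l.1 : ℤ) - i.1)) * (Pi.single κ 1 : Fin (m+1) → ℝ) l
          = schurPf n ((κ.1 : ℤ) - i.1) (u t) := by
        rw [Finset.sum_eq_single κ]
        · rw [Pi.single_eq_same, mul_one]; rfl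
        · intro b _ hb
          rw [Pi.single_eq_of_ne hb, mul_zero]
        · intro h; exact absurd (Finset.mem_univ _) h
      rw [h2] at happ
      have h3 : ∀ l : Fin (m+1),
          t l * ∑ j : Fin n, eval (u t) (pderiv j (schurP n ((l.1 : ℤ) - i.1)))
              * U (Pi.single κ 1) j
            = ∑ j : Fin n,
                t l * schurPf n ((l.1 : ℤ) - ((i.1 : ℤ) + j.1 + 1)) (u t)
                  * U (Pi.single κ 1) j := by
        intro l
        rw [Finset.mul_sum]
        apply Finset.sum_congr rfl
        intro j _
        rw [pderiv_schurP,
          show (l.1 : ℤ) - i.1 - (j.1 + 1) = (l.1 : ℤ) - ((i.1 : ℤ) + j.1 + 1) by ring,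
          ← mul_assoc]
        rfl
      rw [Finset.sum_congr rfl (fun l _ => h3 l), Finset.sum_comm] at happ
      have h4 : ∀ j : Fin n,
          ∑ l : Fin (m+1), t l * schurPf n ((l.1 : ℤ) - ((i.1 : ℤ) + j.1 + 1)) (u t)
            * U (Pi.single κ 1) j
          = (∑ l : Fin (m+1), t l * schurPf n ((l.1 : ℤ) - ((i.1 : ℤ) + j.1 + 1)) (u t))
            * U (Pi.single κ 1) j := by
        intro j
        rw [Finset.sum_mul]
      rw [Finset.sum_congr rfl (fun j _ => h4 j)] at happ
      linarith [happ]
    -- apply key_linalg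
    have hkey := key_linalg hn k.1
      (fun a => schurPf n a (u t))
      (fun r => ∑ l : Fin (m+1), t l * schurPf n ((l.1 : ℤ) - r) (u t))
      (fun a ha => schurPf_neg ha (u t))
      (schurPf_zero n (u t))
      (by
        intro r hr0 hrn
        have : r = ((r.toNat : ℕ) : ℤ) := by omega
        rw [this]
        have := hcrit t ht ⟨r.toNat, by omega⟩
        simpa using this)
      (hnd t ht)
      (fun j => U (Pi.single k 1) j)
      (fun j => U (Pi.single 0 1) j)
      (by
        intro i'
        have := E1 i' k
        convert this using 3 <;> norm_num)
      (by
        intro i'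
        have := E1 i' 0
        convert this using 3 <;> norm_num)
    rw [hproj i]
    have hgoal := hkey i
    simp only [ContinuousLinearMap.comp_apply, ContinuousLinearMap.proj_apply]
    rw [hgoal]
    apply Finset.sum_congr rfl
    intro j _
    rw [hproj j]
    rfl
  · intro w i j
    show (if i ≤ j then schurPf n ((1 : ℤ) + i.1 - j.1) w else 0) = _
    rcases eq_or_ne i j with rfl | hij
    · rw [if_pos le_rfl, if_pos rfl]
      rw [show (1 : ℤ) + i.1 - i.1 = 1 by ring]
      exact schurPf_one hn w
    · rw [if_neg hij]
      rcases eq_or_ne (i.1 + 1) j.1 with hsucc | hsucc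
      · rw [if_pos hsucc, if_pos (by rw [Fin.le_def]; omega)]
        rw [show (1 : ℤ) + i.1 - j.1 = 0 by omega]
        exact schurPf_zero n w
      · rw [if_neg hsucc]
        rcases le_or_gt i j with hle | hlt
        · rw [if_pos hle]
          have : i.1 < j.1 := by
            rcases lt_or_eq_of_le hle with h | h
            · exact h
            · exact absurd h hij
          exact schurPf_neg (by omega) w
        · rw [if_neg (not_le.2 hlt)]
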